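/- If ν₁ν₂ − 1 < 0 and (ν₂ + nν₁)² − 4n < 0, then the function z(θ) = 1 − (ν₂ + nν₁)·Csⁿ(θ)·Sn(θ) is strictly positive for all θ ∈ ℝ. -/

import Mathlib

/-- If `ν₁ν₂ - 1 < 0` and `(ν₂ + nν₁)² - 4n < 0`, then
`z(θ) = 1 - (ν₂ + nν₁)·Csⁿθ·Snθ > 0` for all `θ`, where `Cs`, `Sn` are the generalized
trigonometric functions. -/
theorem stmt_16 (n : ℕ) (hn : 2 ≤ n) (ν₁ ν₂ : ℝ)
    (h1 : ν₁ * ν₂ - 1 < 0) (h2 : (ν₂ + n * ν₁) ^ 2 - 4 * n < 0)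
    (Cs Sn : ℝ → ℝ)
    (hCs : ∀ θ : ℝ, HasDerivAt Cs (-(Sn θ)) θ)
    (hSn : ∀ θ : ℝ, HasDerivAt Sn (Cs θ ^ (2 * n - 1)) θ)
    (hCs0 : Cs 0 = 1) (hSn0 : Sn 0 = 0) :
    ∀ θ : ℝ, 0 < 1 - (ν₂ + n * ν₁) * Cs θ ^ n * Sn θ := by
  -- The energy E θ = Cs θ ^ (2n) + n * Sn θ ^ 2 is constant (= 1).
  set E : ℝ → ℝ := fun θ => Cs θ ^ (2 * n) + n * Sn θ ^ 2 with hE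
  have hE' : ∀ θ : ℝ, HasDerivAt E 0 θ := by
    intro θ
    have h1' : HasDerivAt (fun θ => Cs θ ^ (2 * n))
        ((2 * n : ℕ) * Cs θ ^ (2 * n - 1) * (-(Sn θ))) θ := (hCs θ).pow (2 * n)
    have h2' : HasDerivAt (fun θ => (n : ℝ) * Sn θ ^ 2)
        ((n : ℝ) * ((2 : ℕ) * Sn θ ^ (2 - 1) * (Cs θ ^ (2 * n - 1)))) θ :=
      (((hSn θ).pow 2)).const_mul _
    have := h1'.add h2'
    convert this using 1
    all_goals try rfl
    push_cast
    ring
  have hconst : ∀ θ : ℝ, E θ = 1 := by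
    intro θ
    have : E θ = E 0 := by
      apply is_const_of_deriv_eq_zero
      · intro x; exact (hE' x).differentiableAt
      · intro x; exact (hE' x).deriv
    rw [this]
    simp [hE, hCs0, hSn0]
  intro θ
  have hEθ : Cs θ ^ (2 * n) + n * Sn θ ^ 2 = 1 := hconst θ
  set a := ν₂ + n * ν₁ with ha
  set c := Cs θ ^ n with hc
  set s := Sn θ with hs
  have hc2 : c ^ 2 = Cs θ ^ (2 * n) := by rw [hc, ← pow_mul, mul_comm]
  have key : c ^ 2 + n * s ^ 2 = 1 := by rw [hc2]; exact hEθ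
  have hn4 : 0 < 4 * (n : ℝ) - a ^ 2 := by linarith
  by_contra h
  push_neg at h
  have hsum : (2 * c - a * s) ^ 2 + (4 * n - a ^ 2) * s ^ 2 ≤ 0 := by nlinarith
  have hs0 : s = 0 := by
    have hsq : (4 * (n : ℝ) - a ^ 2) * s ^ 2 ≤ 0 := by nlinarith [sq_nonneg (2 * c - a * s)]
    have hs2 : s ^ 2 ≤ 0 := by
      by_contra hpos
      push_neg at hpos
      nlinarith [mul_pos hn4 hpos]
    have := le_antisymm hs2 (sq_nonneg s)
    exact pow_eq_zero_iff (by norm_num : (2:ℕ) ≠ 0) |>.mp this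
  have hc0 : c = 0 := by
    have : (2 * c - a * s) ^ 2 ≤ 0 := by nlinarith [mul_nonneg hn4.le (sq_nonneg s)]
    have h20 : (2 * c - a * s) = 0 := by nlinarith [sq_nonneg (2 * c - a * s)]
    rw [hs0] at h20; linarith
  rw [hs0, hc0] at key
  norm_num at key
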